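/- Let L₁ be an even ℤ-lattice and p a prime not dividing det L₁. Let v ∈ L₁ with v ∉ pL₁ and ⟨v,v⟩ ∈ 2p²ℤ. Let U₁ = ℤe₁ ⊕ ℤf₁ be a hyperbolic plane (⟨e₁,e₁⟩ = ⟨f₁,f₁⟩ = 0, ⟨e₁,f₁⟩ = 1), set N = U₁ ⊕ L₁, and set f₂ = −(⟨v,v⟩/(2p))·f₁ + p·e₁ + v. Suppose e₂ ∈ N satisfies ⟨e₂,e₂⟩ = 0 and ⟨e₂,f₂⟩ = 1. Then the orthogonal complement L₂ of ℤe₂ + ℤf₂ in N is isometric to the p-neighbor L₁(v) := {x ∈ L₁ : ⟨x,v⟩ ∈ pℤ} + ℤ·(v/p) of L₁, formed inside L₁ ⊗ ℚ. -/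

import Mathlib

open TensorProduct

/-- The orthogonal direct sum `U ⊕ L` of a hyperbolic plane (with basis `e₁ = ((1,0),0)`,
`f₁ = ((0,1),0)`) and the bilinear module `(M, B)`, realised on `(ℤ × ℤ) × M`. -/
def hypSum {M : Type*} [AddCommGroup M] [Module ℤ M]
    (B : LinearMap.BilinForm ℤ M) : LinearMap.BilinForm ℤ ((ℤ × ℤ) × M) :=
  LinearMap.mk₂ ℤ (fun x y => x.1.1 * y.1.2 + x.1.2 * y.1.1 + B x.2 y.2)
    (by intros; simp; ring) (by intros; simp; ring)
    (by intros; simp; ring) (by intros; simp; ring)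

/-- The basis vector `e₁` of the hyperbolic plane in `U ⊕ L`. -/
def hypE₁ {M : Type*} [AddCommGroup M] [Module ℤ M] : (ℤ × ℤ) × M := ((1, 0), 0)

/-- The basis vector `f₁` of the hyperbolic plane in `U ⊕ L`. -/
def hypF₁ {M : Type*} [AddCommGroup M] [Module ℤ M] : (ℤ × ℤ) × M := ((0, 1), 0)

/-- The vector `f₂ = -(⟨v,v⟩/(2p))·f₁ + p·e₁ + v` in `U ⊕ L`. -/
def hypF₂ {M : Type*} [AddCommGroup M] [Module ℤ M]
    (B : LinearMap.BilinForm ℤ M) (p : ℕ) (v : M) : (ℤ × ℤ) × M :=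
  ((p, -(B v v / (2 * p))), v)

/-- The neighbor `L₁(v) = {x ∈ L₁ : ⟨x,v⟩ ∈ pℤ} + ℤ·(v/p)`, formed inside `L₁ ⊗ ℚ`. -/
noncomputable def neighborInQ {M : Type*} [AddCommGroup M] [Module ℤ M]
    (B : LinearMap.BilinForm ℤ M) (p : ℕ) (v : M) : Submodule ℤ (ℚ ⊗[ℤ] M) :=
  Submodule.map ((TensorProduct.mk ℤ ℚ M) 1)
      (Submodule.comap (LinearMap.flip B v) (Ideal.span {(p : ℤ)}))
    ⊔ Submodule.span ℤ {((p : ℚ)⁻¹) ⊗ₜ[ℤ] v}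

/-- with `f₂ = -(⟨v,v⟩/(2p))·f₁ + p·e₁ + v` and `e₂ ∈ N = U₁ ⊕ L₁` isotropic
with `⟨e₂,f₂⟩ = 1`, the orthogonal complement `L₂` of `ℤe₂ + ℤf₂` in `N` is isometric to
the `p`-neighbor `L₁(v)` of `L₁`. -/
theorem orthogonal_complement_isometric_neighbor {M : Type*} [AddCommGroup M] [Module ℤ M]
    [Module.Free ℤ M] [Module.Finite ℤ M]
    (B : LinearMap.BilinForm ℤ M) (hBnd : B.Nondegenerate) (hBsymm : B.IsSymm)
    (heven : ∀ x : M, ∃ n : ℤ, B x x = 2 * n)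
    (p : ℕ) (hp : p.Prime)
    {ι : Type*} [Fintype ι] [DecidableEq ι] (b : Module.Basis ι ℤ M)
    (hdet : ¬ (p : ℤ) ∣ Matrix.det (Matrix.of fun i j => B (b i) (b j)))
    (v : M) (hvp : ¬ ∃ w : M, v = (p : ℤ) • w)
    (hvv : ∃ n : ℤ, B v v = 2 * (p : ℤ) ^ 2 * n)
    (e₂ : (ℤ × ℤ) × M) (he₂ : hypSum B e₂ e₂ = 0)
    (he₂f₂ : hypSum B e₂ (hypF₂ B p v) = 1) :
    ∃ e : (hypSum B).orthogonal (Submodule.span ℤ {e₂, hypF₂ B p v}) ≃ₗ[ℤ]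
        neighborInQ B p v,
      ∀ x y : (hypSum B).orthogonal (Submodule.span ℤ {e₂, hypF₂ B p v}),
        ((hypSum B x y : ℤ) : ℚ) =
          B.baseChange ℚ (e x : ℚ ⊗[ℤ] M) (e y : ℚ ⊗[ℤ] M) := by
  classical
  obtain ⟨n, hn⟩ := hvv
  obtain ⟨⟨a, bb⟩, w⟩ := e₂
  have hp0 : (p : ℤ) ≠ 0 := Int.natCast_ne_zero.mpr hp.ne_zero
  have hpQ : (p : ℚ) ≠ 0 := Nat.cast_ne_zero.mpr hp.ne_zero
  have hzs := fun (c : ℤ) (x : M) => (int_smul_eq_zsmul ‹Module ℤ M› c x).symm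
  have hq : B v v / (2 * (p : ℤ)) = (p : ℤ) * n := by
    rw [hn, show (2 : ℤ) * (p : ℤ) ^ 2 * n = (2 * (p : ℤ)) * ((p : ℤ) * n) by ring,
      Int.mul_ediv_cancel_left _ (mul_ne_zero two_ne_zero hp0)]
  have hS : ∀ x y : (ℤ × ℤ) × M,
      hypSum B x y = x.1.1 * y.1.2 + x.1.2 * y.1.1 + B x.2 y.2 := fun _ _ => rfl
  have hf₂ : hypF₂ B p v = (((p : ℤ), -((p : ℤ) * n)), v) := by
    rw [hypF₂, hq]
  -- the key relation coming from ⟨e₂, f₂⟩ = 1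
  have hkey : a * (-((p : ℤ) * n)) + bb * (p : ℤ) + B w v = 1 := by
    rw [← he₂f₂, hS, hf₂]
  -- membership in the orthogonal complement
  set L₂ := (hypSum B).orthogonal (Submodule.span ℤ {((a, bb), w), hypF₂ B p v}) with hL₂
  have hmem : ∀ x : (ℤ × ℤ) × M,
      x ∈ L₂ ↔ hypSum B ((a, bb), w) x = 0 ∧ hypSum B (hypF₂ B p v) x = 0 := by
    intro x
    constructor
    · intro hx
      exact ⟨hx ((a, bb), w) (Submodule.subset_span (by simp)),
        hx _ (Submodule.subset_span (by simp))⟩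
    · rintro ⟨h1, h2⟩ s hs
      induction hs using Submodule.span_induction with
      | mem s hs =>
        rcases hs with rfl | hs
        · exact h1
        · rw [Set.mem_singleton_iff] at hs; subst hs; exact h2
      | zero => simp [LinearMap.BilinForm.IsOrtho]
      | add x y hx hy ihx ihy =>
        simp only [LinearMap.BilinForm.IsOrtho, map_add, LinearMap.add_apply] at *
        rw [ihx, ihy, add_zero]
      | smul c x hx ihx =>
        simp only [LinearMap.BilinForm.IsOrtho, map_smul, LinearMap.smul_apply] at *
        rw [ihx, smul_zero]
  -- the map Φ : N → ℚ ⊗ M,  x ↦ 1 ⊗ x.2 - x.1.1 • (p⁻¹ ⊗ v)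
  set Φ : ((ℤ × ℤ) × M) →ₗ[ℤ] ℚ ⊗[ℤ] M :=
    (TensorProduct.mk ℤ ℚ M 1).comp (LinearMap.snd ℤ (ℤ × ℤ) M)
    - (LinearMap.toSpanSingleton ℤ (ℚ ⊗[ℤ] M) (((p : ℚ))⁻¹ ⊗ₜ[ℤ] v)).comp
        ((LinearMap.fst ℤ ℤ ℤ).comp (LinearMap.fst ℤ (ℤ × ℤ) M)) with hΦdef
  have hΦ : ∀ x : (ℤ × ℤ) × M,
      Φ x = (1 : ℚ) ⊗ₜ[ℤ] x.2 - x.1.1 • (((p : ℚ))⁻¹ ⊗ₜ[ℤ] v) := fun x => rfl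
  have h1v : (p : ℤ) • (((p : ℚ))⁻¹ ⊗ₜ[ℤ] v) = (1 : ℚ) ⊗ₜ[ℤ] v := by
    rw [smul_tmul', zsmul_eq_mul]
    push_cast
    rw [mul_inv_cancel₀ hpQ]
  -- Φ maps L₂ into the neighbor
  have hsub : ∀ x : (ℤ × ℤ) × M, x ∈ L₂ → Φ x ∈ neighborInQ B p v := by
    intro x hx
    obtain ⟨-, h2⟩ := (hmem x).mp hx
    rw [hS, hf₂] at h2
    dsimp only at h2
    have hBxv : B x.2 v ∈ Ideal.span {(p : ℤ)} := by
      rw [Ideal.mem_span_singleton]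
      refine ⟨n * x.1.1 - x.1.2, ?_⟩
      have hsymm : B v x.2 = B x.2 v := by
        have := hBsymm.eq v x.2; simpa using this
      linear_combination h2 - hsymm
    rw [hΦ]
    apply Submodule.sub_mem
    · exact Submodule.mem_sup_left ⟨x.2, by simpa [LinearMap.flip_apply] using hBxv, rfl⟩
    · exact Submodule.mem_sup_right (Submodule.smul_mem _ _
        (Submodule.mem_span_singleton_self _))
  set φ : L₂ →ₗ[ℤ] neighborInQ B p v :=
    (Φ.comp L₂.subtype).codRestrict _ (fun x => hsub x.1 x.2) with hφdef
  -- coordinates in ℚ ⊗ M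
  set bQ : Module.Basis ι ℚ (ℚ ⊗[ℤ] M) := b.baseChange ℚ with hbQ
  -- injectivity
  have hinj : Function.Injective φ := by
    rw [← LinearMap.ker_eq_bot, LinearMap.ker_eq_bot']
    rintro ⟨x, hx⟩ hx0
    have hΦ0 : Φ x = 0 := congrArg Subtype.val hx0
    rw [hΦ, sub_eq_zero] at hΦ0
    -- coordinatewise: p * (x.2)_i = x.1.1 * v_i
    have hZc : ∀ i, (p : ℤ) * b.repr x.2 i = x.1.1 * b.repr v i := by
      intro i
      have h := congrArg (fun z => bQ.repr z i) hΦ0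
      simp only [hbQ, map_zsmul, Module.Basis.baseChange_repr_tmul, Finsupp.coe_smul,
        Pi.smul_apply, smul_eq_mul, zsmul_eq_mul] at h
      have hcast : (((p : ℤ) * b.repr x.2 i : ℤ) : ℚ) = ((x.1.1 * b.repr v i : ℤ) : ℚ) := by
        push_cast
        field_simp at h ⊢
        linarith [h]
      exact_mod_cast hcast
    by_cases hdvd : (p : ℤ) ∣ x.1.1
    · obtain ⟨t, ht⟩ := hdvd
      have hm : x.2 = t • v := by
        apply b.ext_elem
        intro i
        rw [map_zsmul b.repr, Finsupp.smul_apply, zsmul_eq_mul, Int.cast_id]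
        have h := hZc i
        rw [ht] at h
        have hmul : (p : ℤ) * b.repr x.2 i = (p : ℤ) * (t * b.repr v i) := by
          linear_combination h
        exact mul_left_cancel₀ hp0 hmul
      obtain ⟨h1, h2⟩ := (hmem x).mp hx
      rw [hS, hf₂] at h2
      rw [hS] at h1
      dsimp only at h1 h2
      rw [hm] at h1 h2
      rw [map_zsmul (B w), zsmul_eq_mul, Int.cast_id] at h1
      rw [map_zsmul (B v), zsmul_eq_mul, Int.cast_id] at h2
      rw [hn] at h2
      rw [ht] at h1 h2
      have hx2 : x.1.2 = -((p : ℤ) * t * n) := by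
        have hmul : (p : ℤ) * x.1.2 = (p : ℤ) * (-((p : ℤ) * t * n)) := by
          linear_combination h2
        exact mul_left_cancel₀ hp0 hmul
      have ht0 : t = 0 := by
        rw [hx2] at h1
        linear_combination h1 - t * hkey
      apply Subtype.ext
      show x = 0
      have h11 : x.1.1 = 0 := by rw [ht, ht0, mul_zero]
      have h12 : x.1.2 = 0 := by rw [hx2, ht0]; ring
      have h22 : x.2 = 0 := by rw [hm, ht0, zero_smul]
      exact Prod.ext (Prod.ext h11 h12) h22
    · have hcop : IsCoprime ((p : ℤ)) x.1.1 :=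
        (Nat.prime_iff_prime_int.mp hp).coprime_iff_not_dvd.mpr hdvd
      obtain ⟨u', t, hut⟩ := hcop
      exfalso
      refine hvp ⟨u' • v + t • x.2, ?_⟩
      apply b.ext_elem
      intro i
      rw [map_zsmul b.repr, Finsupp.smul_apply, map_add, map_zsmul b.repr, map_zsmul b.repr,
        Finsupp.add_apply, Finsupp.smul_apply, Finsupp.smul_apply, zsmul_eq_mul, zsmul_eq_mul,
        zsmul_eq_mul, Int.cast_id, Int.cast_id, Int.cast_id]
      linear_combination (-t) * hZc i + (-(b.repr v i)) * hut
  -- surjectivity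
  have hsurj : Function.Surjective φ := by
    rintro ⟨u, hu⟩
    rw [neighborInQ, Submodule.mem_sup] at hu
    obtain ⟨y, hy, z, hz, rfl⟩ := hu
    obtain ⟨k, hk, rfl⟩ := hy
    obtain ⟨c, rfl⟩ := Submodule.mem_span_singleton.mp hz
    have hk' : (p : ℤ) ∣ B k v := by
      simpa [LinearMap.flip_apply, Ideal.mem_span_singleton] using hk
    obtain ⟨d, hd⟩ := hk'
    set s : ℤ := -((-c) * bb + a * ((-c) * n - d) + B w k) with hs
    set x₁ : ℤ := -c + s * p with hx₁
    set x₂ : ℤ := (-c + s * (p : ℤ)) * n - d - 2 * s * (p : ℤ) * n with hx₂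
    set m : M := k + s • v with hm
    have hsymmk : B v k = B k v := by have := hBsymm.eq v k; simpa using this
    have hxmem : ((x₁, x₂), m) ∈ L₂ := by
      rw [hmem]
      constructor
      · rw [hS]
        dsimp only
        rw [hm, map_add (B w), map_zsmul (B w), zsmul_eq_mul, Int.cast_id, hx₁, hx₂]
        linear_combination s * hkey + hs
      · rw [hS, hf₂]
        dsimp only
        rw [hm, map_add (B v), map_zsmul (B v), zsmul_eq_mul, Int.cast_id,
          hsymmk, hd, hn, hx₁, hx₂]
        ring
    refine ⟨⟨((x₁, x₂), m), hxmem⟩, ?_⟩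
    apply Subtype.ext
    show Φ ((x₁, x₂), m) = (TensorProduct.mk ℤ ℚ M) 1 k + c • (((p : ℚ))⁻¹ ⊗ₜ[ℤ] v)
    rw [hΦ]
    dsimp only
    have hts : (1 : ℚ) ⊗ₜ[ℤ] m = (1 : ℚ) ⊗ₜ[ℤ] k + s • ((1 : ℚ) ⊗ₜ[ℤ] v) := by
      rw [hm, tmul_add]
      congr 1
      rw [hzs s v]
      exact LinearMap.map_smul (TensorProduct.mk ℤ ℚ M 1) s v
    rw [hts, hx₁, ← h1v]
    have hmk : ((TensorProduct.mk ℤ ℚ M) 1) k = (1 : ℚ) ⊗ₜ[ℤ] k := rfl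
    rw [hmk]
    simp only [← Int.cast_smul_eq_zsmul ℚ]
    rw [smul_smul, add_sub_assoc, ← sub_smul]
    congr 1
    push_cast
    ring
  refine ⟨LinearEquiv.ofBijective φ ⟨hinj, hsurj⟩, ?_⟩
  intro x y
  obtain ⟨-, hx2⟩ := (hmem x.1).mp x.2
  obtain ⟨-, hy2⟩ := (hmem y.1).mp y.2
  rw [hS, hf₂] at hx2 hy2
  dsimp only at hx2 hy2
  have hsx : B v x.1.2 = B x.1.2 v := by have := hBsymm.eq v x.1.2; simpa using this
  have hsy : B v y.1.2 = B y.1.2 v := by have := hBsymm.eq v y.1.2; simpa using this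
  have hRHS : (LinearEquiv.ofBijective φ ⟨hinj, hsurj⟩ x : ℚ ⊗[ℤ] M) = Φ x.1 := rfl
  have hRHSy : (LinearEquiv.ofBijective φ ⟨hinj, hsurj⟩ y : ℚ ⊗[ℤ] M) = Φ y.1 := rfl
  rw [hRHS, hRHSy, hΦ, hΦ, hS]
  simp only [← Int.cast_smul_eq_zsmul ℚ]
  simp only [map_sub, map_smul, LinearMap.sub_apply, LinearMap.smul_apply,
    LinearMap.BilinForm.baseChange_tmul, smul_eq_mul, zsmul_eq_mul]
  have hx2Q : (p : ℚ) * (x.1.1.2 : ℚ) + -((p : ℚ) * (n : ℚ)) * (x.1.1.1 : ℚ)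
      + ((B v x.1.2 : ℤ) : ℚ) = 0 := by
    exact_mod_cast congrArg (fun z : ℤ => (z : ℚ)) hx2
  have hy2Q : (p : ℚ) * (y.1.1.2 : ℚ) + -((p : ℚ) * (n : ℚ)) * (y.1.1.1 : ℚ)
      + ((B v y.1.2 : ℤ) : ℚ) = 0 := by
    exact_mod_cast congrArg (fun z : ℤ => (z : ℚ)) hy2
  have hbvy : ((B v y.1.2 : ℤ) : ℚ)
      = (p : ℚ) * (n : ℚ) * (y.1.1.1 : ℚ) - (p : ℚ) * (y.1.1.2 : ℚ) := by
    linear_combination hy2Q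
  have hbxv : ((B x.1.2 v : ℤ) : ℚ)
      = (p : ℚ) * (n : ℚ) * (x.1.1.1 : ℚ) - (p : ℚ) * (x.1.1.2 : ℚ) := by
    have hsxQ : ((B v x.1.2 : ℤ) : ℚ) = ((B x.1.2 v : ℤ) : ℚ) := by rw [hsx]
    linear_combination hx2Q - hsxQ
  have hnQ : ((B v v : ℤ) : ℚ) = 2 * (p : ℚ) ^ 2 * (n : ℚ) := by
    rw [hn]; push_cast; ring
  rw [hbvy, hbxv, hnQ]
  push_cast
  field_simp
  ring
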